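/- Let f: ℝ^d → ℝ be continuous and bounded below, β > 0, and suppose ∫ e^{−β f(x)} dμ(x) > 0. If f satisfies f(x) − f_* ≥ c_b‖x‖^ℓ − C_b and f(x) − f_* ≤ c_a‖x‖^ℓ + C_a with ℓ > 0 and positive constants, then there exists a constant C_𝓜 > 0, depending only on p, ℓ, c_b, C_b, c_a, C_a, β, such that the weighted mean 𝓜_β(μ) := (∫ x e^{−β f(x)} dμ(x)) / (∫ e^{−β f(x)} dμ(x)) satisfies ‖𝓜_β(μ)‖ ≤ C_𝓜 · (∫ ‖x‖^p dμ(x))^{1/p} for all μ ∈ 𝒫_p(ℝ^d) and all p ≥ 1. -/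

import Mathlib

open MeasureTheory

noncomputable section

/-- The consensus point `𝓜_β(μ) = (∫ x e^{-βf(x)} dμ) / (∫ e^{-βf(x)} dμ)`. -/
def consensus {d : ℕ} (β : ℝ) (f : EuclideanSpace ℝ (Fin d) → ℝ)
    (μ : Measure (EuclideanSpace ℝ (Fin d))) : EuclideanSpace ℝ (Fin d) :=
  (∫ x, Real.exp (-β * f x) ∂μ)⁻¹ • ∫ x, Real.exp (-β * f x) • x ∂μ

lemma aux_weight_bound {c ℓ : ℝ} (hc : 0 < c) (hℓ : 0 < ℓ) :
    ∃ B : ℝ, 0 < B ∧ ∀ t : ℝ, 0 ≤ t → t * Real.exp (-(c * t ^ ℓ)) ≤ B := by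
  set n := ⌈1/ℓ⌉₊ with hn
  have hn' : (1:ℝ)/ℓ ≤ n := Nat.le_ceil _
  have hn0 : 0 < (n:ℝ) := lt_of_lt_of_le (by positivity) hn'
  have hnne : (n:ℝ) ≠ 0 := ne_of_gt hn0
  refine ⟨max 1 (((n:ℝ)/c)^n), lt_of_lt_of_le one_pos (le_max_left _ _), fun t ht => ?_⟩
  rcases le_or_gt t 1 with h1 | h1
  · have he : Real.exp (-(c * t ^ ℓ)) ≤ 1 := by
      apply Real.exp_le_one_iff.2
      have : 0 ≤ t ^ ℓ := Real.rpow_nonneg ht ℓ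
      nlinarith
    calc t * Real.exp (-(c * t ^ ℓ)) ≤ 1 * 1 := by
          apply mul_le_mul h1 he (Real.exp_nonneg _) (by norm_num)
      _ ≤ _ := by simp
  · have ht0 : 0 < t := lt_trans one_pos h1
    have htl : (1:ℝ) ≤ t ^ ℓ := by
      calc (1:ℝ) = (1:ℝ) ^ ℓ := (Real.one_rpow ℓ).symm
        _ ≤ t ^ ℓ := Real.rpow_le_rpow (by norm_num) h1.le hℓ.le
    have htl0 : 0 < t ^ ℓ := lt_of_lt_of_le one_pos htl
    have h2 : (c * t ^ ℓ / n) ^ n ≤ Real.exp (c * t ^ ℓ) := by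
      have hx := Real.add_one_le_exp (c * t ^ ℓ / n)
      calc (c * t ^ ℓ / n) ^ n ≤ (Real.exp (c * t ^ ℓ / n)) ^ n :=
            pow_le_pow_left₀ (by positivity) (by linarith) n
        _ = Real.exp ((n:ℝ) * (c * t ^ ℓ / n)) := (Real.exp_nat_mul _ n).symm
        _ = Real.exp (c * t ^ ℓ) := by rw [mul_div_cancel₀ _ hnne]
    have h3 : Real.exp (-(c * t ^ ℓ)) ≤ ((c * t ^ ℓ / n) ^ n)⁻¹ := by
      rw [Real.exp_neg]
      exact inv_anti₀ (by positivity) h2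
    have e2 : ((t:ℝ) ^ ℓ) ^ (n:ℕ) = t ^ (ℓ * (n:ℝ)) := by
      rw [← Real.rpow_natCast (t ^ ℓ) n, ← Real.rpow_mul ht]
    have h4 : t / t ^ (ℓ * (n:ℝ)) ≤ 1 := by
      rw [div_le_one (by positivity)]
      have h1ln : (1:ℝ) ≤ ℓ * n := by
        have := mul_le_mul_of_nonneg_left hn' hℓ.le
        calc (1:ℝ) = ℓ * (1/ℓ) := by field_simp
          _ ≤ ℓ * n := this
      calc t = t ^ (1:ℝ) := (Real.rpow_one t).symm
        _ ≤ t ^ (ℓ * (n:ℝ)) := Real.rpow_le_rpow_of_exponent_le h1.le h1ln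
    have e1 : (c * t ^ ℓ / (n:ℝ)) ^ n = (c/n) ^ n * t ^ (ℓ * (n:ℝ)) := by
      rw [mul_div_right_comm, mul_pow, e2]
    have htpow : 0 < t ^ (ℓ * (n:ℝ)) := Real.rpow_pos_of_pos ht0 _
    calc t * Real.exp (-(c * t ^ ℓ)) ≤ t * ((c * t ^ ℓ / n) ^ n)⁻¹ :=
          mul_le_mul_of_nonneg_left h3 ht
      _ = ((n:ℝ)/c) ^ n * (t / t ^ (ℓ * (n:ℝ))) := by
          rw [e1, mul_inv, ← inv_pow, inv_div, div_eq_mul_inv, div_eq_mul_inv]; ring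
      _ ≤ ((n:ℝ)/c) ^ n * 1 := mul_le_mul_of_nonneg_left h4 (by positivity)
      _ ≤ _ := by rw [mul_one]; exact le_max_right _ _

lemma aux_rpow_le_exp {ℓ p t : ℝ} (hℓ : 0 < ℓ) (hp : 0 < p) (ht : 1 ≤ t) :
    t ^ p ≤ Real.exp (p/ℓ * t ^ ℓ) := by
  have ht0 : (0:ℝ) < t := lt_of_lt_of_le one_pos ht
  rw [Real.rpow_def_of_pos ht0]
  apply Real.exp_le_exp.2
  have h1 : Real.log (t ^ ℓ) = ℓ * Real.log t := Real.log_rpow ht0 ℓ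
  have h2 : Real.log (t ^ ℓ) ≤ t ^ ℓ - 1 :=
    Real.log_le_sub_one_of_pos (Real.rpow_pos_of_pos ht0 ℓ)
  have h3 : ℓ * Real.log t ≤ t ^ ℓ := by nlinarith
  have hlog : Real.log t ≤ t ^ ℓ / ℓ := by
    rw [le_div_iff₀ hℓ]; nlinarith
  calc Real.log t * p ≤ (t ^ ℓ / ℓ) * p := mul_le_mul_of_nonneg_right hlog hp.le
    _ = p/ℓ * t ^ ℓ := by ring

lemma aux_le_rpow_add_one {p t : ℝ} (hp : 1 ≤ p) (ht : 0 ≤ t) : t ≤ t ^ p + 1 := by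
  rcases le_or_gt t 1 with h1 | h1
  · have : 0 ≤ t ^ p := Real.rpow_nonneg ht p
    linarith
  · have h2 : t ^ (1:ℝ) ≤ t ^ p := Real.rpow_le_rpow_of_exponent_le h1.le hp
    rw [Real.rpow_one] at h2
    linarith

lemma aux_young {p s : ℝ} (hp : 1 ≤ p) (hs : 0 ≤ s) : p * s ≤ s ^ p + (p - 1) := by
  have h := one_add_mul_self_le_rpow_one_add (s := s - 1) (by linarith) hp
  have he : (1:ℝ) + (s - 1) = s := by ring
  rw [he] at h
  linarith

set_option maxHeartbeats 2000000 in
/-- Sublinearity of the consensus point: under coercive growth bounds on `f` (with `ℓ > 0`),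
there is `C_𝓜 > 0` with `‖𝓜_β(μ)‖ ≤ C_𝓜 · 𝔪_p(μ)` for all `μ ∈ 𝒫_p(ℝ^d)`. -/
theorem stmt4 {d : ℕ} (f : EuclideanSpace ℝ (Fin d) → ℝ) (hf : Continuous f)
    (β : ℝ) (hβ : 0 < β) (fstar : ℝ) (hfstar : IsGLB (Set.range f) fstar)
    (ℓ cb Cb ca Ca : ℝ) (hℓ : 0 < ℓ)
    (hcb : 0 < cb) (hCb : 0 < Cb) (hca : 0 < ca) (hCa : 0 < Ca)
    (hlow : ∀ x, cb * ‖x‖ ^ ℓ - Cb ≤ f x - fstar)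
    (hup : ∀ x, f x - fstar ≤ ca * ‖x‖ ^ ℓ + Ca)
    (p : ℝ) (hp : 1 ≤ p) :
    ∃ C > (0 : ℝ), ∀ μ : Measure (EuclideanSpace ℝ (Fin d)),
      IsProbabilityMeasure μ → Integrable (fun x => ‖x‖ ^ p) μ →
      0 < ∫ x, Real.exp (-β * f x) ∂μ →
      ‖consensus β f μ‖ ≤ C * (∫ x, ‖x‖ ^ p ∂μ) ^ (1 / p) := by
  have hc1 : 0 < β * cb := mul_pos hβ hcb
  have hc2 : 0 < β * ca := mul_pos hβ hca
  have hp0 : (0:ℝ) < p := lt_of_lt_of_le one_pos hp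
  obtain ⟨B, hB, hBbd⟩ := aux_weight_bound hc1 hℓ
  have h2l : (0:ℝ) < (2:ℝ)^ℓ := Real.rpow_pos_of_pos two_pos ℓ
  obtain ⟨K, hKdef⟩ : ∃ K : ℝ, K = max 1 (((β*ca*2^ℓ + p/ℓ)/(β*cb)) ^ (1/ℓ)) := ⟨_, rfl⟩
  have hK1 : (1:ℝ) ≤ K := hKdef ▸ le_max_left _ _
  have hK0 : (0:ℝ) < K := lt_of_lt_of_le one_pos hK1
  have hKexp : β*ca*2^ℓ + p/ℓ ≤ β*cb * K^ℓ := by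
    have hq : (0:ℝ) ≤ (β*ca*2^ℓ + p/ℓ)/(β*cb) := by positivity
    have h1 : ((β*ca*2^ℓ + p/ℓ)/(β*cb)) ^ (1/ℓ) ≤ K := hKdef ▸ le_max_right _ _
    have h2 : (β*ca*2^ℓ + p/ℓ)/(β*cb) ≤ K ^ ℓ := by
      calc (β*ca*2^ℓ + p/ℓ)/(β*cb)
          = ((((β*ca*2^ℓ + p/ℓ)/(β*cb)) ^ (1/ℓ)) : ℝ) ^ ℓ := by
            rw [← Real.rpow_mul hq, one_div, inv_mul_cancel₀ hℓ.ne', Real.rpow_one]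
        _ ≤ K ^ ℓ := Real.rpow_le_rpow (Real.rpow_nonneg hq _) h1 hℓ.le
    have h3 := (div_le_iff₀ hc1).1 h2
    linarith [mul_comm (K^ℓ) (β*cb)]
  obtain ⟨E, hEdef⟩ : ∃ E : ℝ, E = Real.exp (β*(Ca+Cb)) := ⟨_, rfl⟩
  have hE0 : 0 < E := hEdef ▸ Real.exp_pos _
  refine ⟨max (K + 2*E) (2*E*Real.exp (β*ca*2^ℓ)),
    lt_of_lt_of_le (by linarith only [hK0, hE0]) (le_max_left _ _), ?_⟩
  intro μ hμ hIp hD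
  obtain ⟨Cm, hCmdef⟩ : ∃ Cm : ℝ, Cm = max (K + 2*E) (2*E*Real.exp (β*ca*2^ℓ)) := ⟨_, rfl⟩
  obtain ⟨I, hIdef⟩ : ∃ I : ℝ, I = ∫ x, ‖x‖ ^ p ∂μ := ⟨_, rfl⟩
  obtain ⟨m, hmdef⟩ : ∃ m : ℝ, m = I ^ (1/p) := ⟨_, rfl⟩
  rw [← hCmdef, ← hIdef, ← hmdef]
  simp only [consensus]
  obtain ⟨w, hwdef⟩ : ∃ w : EuclideanSpace ℝ (Fin d) → ℝ,
      ∀ x, w x = Real.exp (-β * f x) := ⟨_, fun _ => rfl⟩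
  simp only [← hwdef] at hD ⊢
  have hI0 : 0 ≤ I := by
    rw [hIdef]; exact integral_nonneg fun x => Real.rpow_nonneg (norm_nonneg x) p
  have hm0 : 0 ≤ m := by rw [hmdef]; exact Real.rpow_nonneg hI0 _
  have hmp : m ^ p = I := by
    rw [hmdef, ← Real.rpow_mul hI0, one_div, inv_mul_cancel₀ hp0.ne', Real.rpow_one]
  obtain ⟨M, hMdef⟩ : ∃ M : ℝ, M = max 1 m := ⟨_, rfl⟩
  have hM1 : (1:ℝ) ≤ M := hMdef ▸ le_max_left _ _
  have hM0 : (0:ℝ) < M := lt_of_lt_of_le one_pos hM1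
  have hMm : m ≤ M := hMdef ▸ le_max_right _ _
  have hIM : I ≤ M ^ p := by
    rw [← hmp]; exact Real.rpow_le_rpow hm0 hMm hp0.le
  have hM1p : (1:ℝ) ≤ M ^ p := by
    calc (1:ℝ) = (1:ℝ) ^ p := (Real.one_rpow p).symm
      _ ≤ M ^ p := Real.rpow_le_rpow (by norm_num) hM1 hp0.le
  -- weight bounds
  have hw_pos : ∀ x, 0 < w x := fun x => (hwdef x) ▸ Real.exp_pos _
  obtain ⟨A1, hA1def⟩ : ∃ A1 : ℝ, A1 = Real.exp (β*Cb - β*fstar) := ⟨_, rfl⟩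
  obtain ⟨A2, hA2def⟩ : ∃ A2 : ℝ, A2 = Real.exp (-(β*Ca) - β*fstar) := ⟨_, rfl⟩
  have hA10 : 0 < A1 := hA1def ▸ Real.exp_pos _
  have hA20 : 0 < A2 := hA2def ▸ Real.exp_pos _
  have hup' : ∀ x, w x ≤ A1 * Real.exp (-(β*cb*‖x‖^ℓ)) := by
    intro x
    rw [hwdef x, hA1def, ← Real.exp_add]
    apply Real.exp_le_exp.2
    linarith only [mul_le_mul_of_nonneg_left (hlow x) hβ.le]
  have hlow' : ∀ x, A2 * Real.exp (-(β*ca*‖x‖^ℓ)) ≤ w x := by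
    intro x
    rw [hwdef x, hA2def, ← Real.exp_add]
    apply Real.exp_le_exp.2
    linarith only [mul_le_mul_of_nonneg_left (hup x) hβ.le]
  have hwA1 : ∀ x, w x ≤ A1 := by
    intro x
    refine (hup' x).trans ?_
    have h1 : Real.exp (-(β*cb*‖x‖^ℓ)) ≤ 1 := by
      apply Real.exp_le_one_iff.2
      exact neg_nonpos.mpr (mul_nonneg hc1.le (Real.rpow_nonneg (norm_nonneg x) ℓ))
    exact mul_le_of_le_one_right hA10.le h1
  have hA1EA2 : A1 = E * A2 := by
    rw [hA1def, hA2def, hEdef, ← Real.exp_add]; congr 1; ring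
  -- integrability
  have hw_cont : Continuous w := by
    have : w = fun x => Real.exp (-β * f x) := funext hwdef
    rw [this]
    exact Real.continuous_exp.comp (continuous_const.mul hf)
  have hw_int : Integrable w μ :=
    ⟨hw_cont.aestronglyMeasurable, HasFiniteIntegral.of_bounded (C := A1)
      (Filter.Eventually.of_forall fun x => by
        rw [Real.norm_eq_abs, abs_of_pos (hw_pos x)]; exact hwA1 x)⟩
  have hwn_bd : ∀ x, w x * ‖x‖ ≤ A1 * B := by
    intro x
    calc w x * ‖x‖ ≤ A1 * Real.exp (-(β*cb*‖x‖^ℓ)) * ‖x‖ :=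
          mul_le_mul_of_nonneg_right (hup' x) (norm_nonneg x)
      _ = A1 * (‖x‖ * Real.exp (-(β*cb*‖x‖^ℓ))) := by ring
      _ ≤ A1 * B := mul_le_mul_of_nonneg_left (hBbd ‖x‖ (norm_nonneg x)) hA10.le
  have hwx_int : Integrable (fun x => w x • x) μ :=
    ⟨(hw_cont.smul continuous_id).aestronglyMeasurable,
      HasFiniteIntegral.of_bounded (C := A1 * B) (Filter.Eventually.of_forall fun x => by
        rw [norm_smul, Real.norm_eq_abs, abs_of_pos (hw_pos x)]; exact hwn_bd x)⟩
  have hwn_int : Integrable (fun x => w x * ‖x‖) μ :=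
    ⟨(hw_cont.mul continuous_norm).aestronglyMeasurable,
      HasFiniteIntegral.of_bounded (C := A1 * B) (Filter.Eventually.of_forall fun x => by
        rw [Real.norm_eq_abs, abs_of_nonneg (mul_nonneg (hw_pos x).le (norm_nonneg x))]
        exact hwn_bd x)⟩
  have hn_int : Integrable (fun x : EuclideanSpace ℝ (Fin d) => ‖x‖) μ := by
    refine (hIp.add (integrable_const 1)).mono continuous_norm.aestronglyMeasurable
      (Filter.Eventually.of_forall fun x => ?_)
    have hb1 : (0:ℝ) ≤ ‖x‖^p + 1 := by positivity
    simp only [Pi.add_apply, Real.norm_eq_abs, abs_of_nonneg (norm_nonneg x),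
      abs_of_nonneg hb1]
    exact aux_le_rpow_add_one hp (norm_nonneg x)
  have hmeas : ∀ r : ℝ, MeasurableSet {x : EuclideanSpace ℝ (Fin d) | ‖x‖ ≤ r} :=
    fun r => (isClosed_le continuous_norm continuous_const).measurableSet
  -- Markov: at least half the mass in the ball of radius 2*M
  have hmB2 : (1:ℝ)/2 ≤ (μ {x : EuclideanSpace ℝ (Fin d) | ‖x‖ ≤ 2*M}).toReal := by
    have hmark := mul_meas_ge_le_integral_of_nonneg
      (Filter.Eventually.of_forall fun x => Real.rpow_nonneg (norm_nonneg x) p) hIp ((2*M)^p)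
    have hsub : {x : EuclideanSpace ℝ (Fin d) | ‖x‖ ≤ 2*M}ᶜ ⊆
        {x : EuclideanSpace ℝ (Fin d) | (2*M)^p ≤ ‖x‖^p} := by
      intro x hx
      have hx' : 2*M < ‖x‖ := not_le.1 hx
      exact Real.rpow_le_rpow (by linarith only [hM0]) hx'.le hp0.le
    have h2Mp : 2 * M^p ≤ (2*M)^p := by
      rw [Real.mul_rpow (by norm_num) hM0.le]
      have h2p : (2:ℝ) ≤ 2^p := by
        calc (2:ℝ) = 2^(1:ℝ) := (Real.rpow_one 2).symm
          _ ≤ 2^p := Real.rpow_le_rpow_of_exponent_le one_le_two hp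
      exact mul_le_mul_of_nonneg_right h2p (Real.rpow_nonneg hM0.le p)
    have hμc : (2*M)^p * (μ {x : EuclideanSpace ℝ (Fin d) | ‖x‖ ≤ 2*M}ᶜ).toReal ≤ I := by
      rw [hIdef]
      refine le_trans ?_ hmark
      exact mul_le_mul_of_nonneg_left
        (ENNReal.toReal_mono (measure_ne_top μ _) (measure_mono hsub))
        (Real.rpow_nonneg (by linarith only [hM0]) p)
    have hMppos : (0:ℝ) < M^p := lt_of_lt_of_le one_pos hM1p
    have hc12 : (μ {x : EuclideanSpace ℝ (Fin d) | ‖x‖ ≤ 2*M}ᶜ).toReal ≤ 1/2 := by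
      by_contra hcon
      push_neg at hcon
      have h1 : 2 * M^p * (μ {x : EuclideanSpace ℝ (Fin d) | ‖x‖ ≤ 2*M}ᶜ).toReal ≤ I :=
        le_trans (mul_le_mul_of_nonneg_right h2Mp ENNReal.toReal_nonneg) hμc
      have h8 : (2*M^p)*(1/2) < (2*M^p)*(μ {x : EuclideanSpace ℝ (Fin d) | ‖x‖ ≤ 2*M}ᶜ).toReal :=
        mul_lt_mul_of_pos_left hcon (by linarith only [hMppos])
      linarith only [h8, h1, hIM]
    have hsum : (μ {x : EuclideanSpace ℝ (Fin d) | ‖x‖ ≤ 2*M}).toReal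
        + (μ {x : EuclideanSpace ℝ (Fin d) | ‖x‖ ≤ 2*M}ᶜ).toReal = 1 := by
      rw [← ENNReal.toReal_add (measure_ne_top μ _) (measure_ne_top μ _),
        measure_add_measure_compl (hmeas _), measure_univ, ENNReal.toReal_one]
    linarith only [hsum, hc12]
  -- lower bound on the denominator
  have hDlow : 1/2 * (A2 * Real.exp (-(β*ca*(2*M)^ℓ))) ≤ ∫ x, w x ∂μ := by
    have hconst : (0:ℝ) ≤ A2 * Real.exp (-(β*ca*(2*M)^ℓ)) :=
      mul_nonneg hA20.le (Real.exp_nonneg _)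
    calc 1/2 * (A2 * Real.exp (-(β*ca*(2*M)^ℓ)))
        ≤ (μ {x : EuclideanSpace ℝ (Fin d) | ‖x‖ ≤ 2*M}).toReal
          * (A2 * Real.exp (-(β*ca*(2*M)^ℓ))) := mul_le_mul_of_nonneg_right hmB2 hconst
      _ = ∫ _x in {x : EuclideanSpace ℝ (Fin d) | ‖x‖ ≤ 2*M},
            A2 * Real.exp (-(β*ca*(2*M)^ℓ)) ∂μ := by
          rw [setIntegral_const, smul_eq_mul, Measure.real]
      _ ≤ ∫ x in {x : EuclideanSpace ℝ (Fin d) | ‖x‖ ≤ 2*M}, w x ∂μ := by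
          apply setIntegral_mono_on (integrableOn_const (measure_lt_top μ _).ne)
            hw_int.integrableOn (hmeas _)
          intro x hx
          have hx' : ‖x‖ ≤ 2*M := hx
          have hxl : ‖x‖^ℓ ≤ (2*M)^ℓ := Real.rpow_le_rpow (norm_nonneg x) hx' hℓ.le
          refine le_trans ?_ (hlow' x)
          apply mul_le_mul_of_nonneg_left _ hA20.le
          apply Real.exp_le_exp.2
          linarith only [mul_le_mul_of_nonneg_left hxl hc2.le]
      _ ≤ ∫ x, w x ∂μ := setIntegral_le_integral hw_int
            (Filter.Eventually.of_forall fun x => (hw_pos x).le)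
  have hNle : ‖∫ x, w x • x ∂μ‖ ≤ ∫ x, w x * ‖x‖ ∂μ := by
    refine le_trans (norm_integral_le_integral_norm _)
      (le_of_eq (integral_congr_ae (Filter.Eventually.of_forall fun x => ?_)))
    show ‖w x • x‖ = w x * ‖x‖
    rw [norm_smul, Real.norm_eq_abs, abs_of_pos (hw_pos x)]
  rw [norm_smul, Real.norm_eq_abs, abs_of_pos (inv_pos.2 hD), inv_mul_le_iff₀ hD]
  rcases le_or_gt 1 m with hm1 | hm1
  -- case m ≥ 1
  · have hMM : M = m := by rw [hMdef]; exact max_eq_right hm1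
    rw [hMM] at hDlow
    have hRm1 : (1:ℝ) ≤ K*m := by
      have h9 := mul_le_mul hK1 hm1 zero_le_one hK0.le
      linarith only [h9]
    have hKm0 : (0:ℝ) ≤ K*m := by linarith only [hRm1]
    have hsplit : (∫ x, w x * ‖x‖ ∂μ) =
        (∫ x in {x : EuclideanSpace ℝ (Fin d) | ‖x‖ ≤ K*m}, w x * ‖x‖ ∂μ)
        + ∫ x in {x : EuclideanSpace ℝ (Fin d) | ‖x‖ ≤ K*m}ᶜ, w x * ‖x‖ ∂μ :=
      (integral_add_compl (hmeas _) hwn_int).symm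
    have hS1 : (∫ x in {x : EuclideanSpace ℝ (Fin d) | ‖x‖ ≤ K*m}, w x * ‖x‖ ∂μ)
        ≤ K*m * ∫ x, w x ∂μ := by
      calc (∫ x in {x : EuclideanSpace ℝ (Fin d) | ‖x‖ ≤ K*m}, w x * ‖x‖ ∂μ)
          ≤ ∫ x in {x : EuclideanSpace ℝ (Fin d) | ‖x‖ ≤ K*m}, K*m * w x ∂μ := by
            apply setIntegral_mono_on hwn_int.integrableOn
              ((hw_int.const_mul (K*m)).integrableOn) (hmeas _)
            intro x hx
            have hx' : ‖x‖ ≤ K*m := hx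
            linarith only [mul_le_mul_of_nonneg_left hx' (hw_pos x).le]
        _ = K*m * ∫ x in {x : EuclideanSpace ℝ (Fin d) | ‖x‖ ≤ K*m}, w x ∂μ :=
            integral_const_mul _ _
        _ ≤ K*m * ∫ x, w x ∂μ := mul_le_mul_of_nonneg_left
            (setIntegral_le_integral hw_int
              (Filter.Eventually.of_forall fun x => (hw_pos x).le)) hKm0
    have hS2 : (∫ x in {x : EuclideanSpace ℝ (Fin d) | ‖x‖ ≤ K*m}ᶜ, w x * ‖x‖ ∂μ)
        ≤ A1 * Real.exp (-(β*cb*(K*m)^ℓ)) * I := by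
      have hAe0 : (0:ℝ) ≤ A1 * Real.exp (-(β*cb*(K*m)^ℓ)) :=
        mul_nonneg hA10.le (Real.exp_nonneg _)
      calc (∫ x in {x : EuclideanSpace ℝ (Fin d) | ‖x‖ ≤ K*m}ᶜ, w x * ‖x‖ ∂μ)
          ≤ ∫ x in {x : EuclideanSpace ℝ (Fin d) | ‖x‖ ≤ K*m}ᶜ,
              A1 * Real.exp (-(β*cb*(K*m)^ℓ)) * ‖x‖^p ∂μ := by
            apply setIntegral_mono_on hwn_int.integrableOn
              ((hIp.const_mul _).integrableOn) (hmeas _).compl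
            intro x hx
            simp only [Set.mem_compl_iff, Set.mem_setOf_eq, not_le] at hx
            have h1x : (1:ℝ) ≤ ‖x‖ := le_trans hRm1 hx.le
            have ha : ‖x‖ ≤ ‖x‖^p := by
              calc ‖x‖ = ‖x‖^(1:ℝ) := (Real.rpow_one _).symm
                _ ≤ ‖x‖^p := Real.rpow_le_rpow_of_exponent_le h1x hp
            have hb : Real.exp (-(β*cb*‖x‖^ℓ)) ≤ Real.exp (-(β*cb*(K*m)^ℓ)) := by
              apply Real.exp_le_exp.2
              have h5 : (K*m)^ℓ ≤ ‖x‖^ℓ := Real.rpow_le_rpow hKm0 hx.le hℓ.le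
              linarith only [mul_le_mul_of_nonneg_left h5 hc1.le]
            calc w x * ‖x‖ ≤ (A1 * Real.exp (-(β*cb*‖x‖^ℓ))) * ‖x‖ :=
                  mul_le_mul_of_nonneg_right (hup' x) (norm_nonneg x)
              _ ≤ A1 * Real.exp (-(β*cb*(K*m)^ℓ)) * ‖x‖^p :=
                  mul_le_mul (mul_le_mul_of_nonneg_left hb hA10.le) ha (norm_nonneg x) hAe0
        _ = A1 * Real.exp (-(β*cb*(K*m)^ℓ))
            * ∫ x in {x : EuclideanSpace ℝ (Fin d) | ‖x‖ ≤ K*m}ᶜ, ‖x‖^p ∂μ :=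
            integral_const_mul _ _
        _ ≤ A1 * Real.exp (-(β*cb*(K*m)^ℓ)) * I := by
            rw [hIdef]
            exact mul_le_mul_of_nonneg_left
              (setIntegral_le_integral hIp (Filter.Eventually.of_forall fun x =>
                Real.rpow_nonneg (norm_nonneg x) p)) hAe0
    -- tail estimate
    have hIexp : I ≤ Real.exp (p/ℓ * m^ℓ) := by
      rw [← hmp]; exact aux_rpow_le_exp hℓ hp0 hm1
    have hml : (0:ℝ) ≤ m^ℓ := Real.rpow_nonneg hm0 ℓ
    have e1 : ((2:ℝ)*m)^ℓ = 2^ℓ*m^ℓ := Real.mul_rpow (by norm_num) hm0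
    have e2 : (K*m)^ℓ = K^ℓ*m^ℓ := Real.mul_rpow hK0.le hm0
    have h1exp : Real.exp (-(β*cb*(K*m)^ℓ) + p/ℓ*m^ℓ + β*ca*(2*m)^ℓ) ≤ m := by
      refine le_trans ?_ hm1
      rw [Real.exp_le_one_iff, e1, e2]
      linarith only [mul_le_mul_of_nonneg_right hKexp hml]
    have hee' : Real.exp (-(β*cb*(K*m)^ℓ)) * Real.exp (p/ℓ*m^ℓ)
        ≤ m * Real.exp (-(β*ca*(2*m)^ℓ)) := by
      calc Real.exp (-(β*cb*(K*m)^ℓ)) * Real.exp (p/ℓ*m^ℓ)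
          = Real.exp (-(β*cb*(K*m)^ℓ) + p/ℓ*m^ℓ + β*ca*(2*m)^ℓ)
            * Real.exp (-(β*ca*(2*m)^ℓ)) := by
            rw [← Real.exp_add, ← Real.exp_add]; congr 1; ring
        _ ≤ m * Real.exp (-(β*ca*(2*m)^ℓ)) :=
            mul_le_mul_of_nonneg_right h1exp (Real.exp_nonneg _)
    have htail : A1 * Real.exp (-(β*cb*(K*m)^ℓ)) * I ≤ 2*E*m * ∫ x, w x ∂μ := by
      have hEm0 : (0:ℝ) ≤ 2*E*m := mul_nonneg (by linarith only [hE0]) hm0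
      calc A1 * Real.exp (-(β*cb*(K*m)^ℓ)) * I
          ≤ A1 * Real.exp (-(β*cb*(K*m)^ℓ)) * Real.exp (p/ℓ*m^ℓ) :=
            mul_le_mul_of_nonneg_left hIexp
              (mul_nonneg hA10.le (Real.exp_nonneg _))
        _ = A1 * (Real.exp (-(β*cb*(K*m)^ℓ)) * Real.exp (p/ℓ*m^ℓ)) := by ring
        _ ≤ A1 * (m * Real.exp (-(β*ca*(2*m)^ℓ))) :=
            mul_le_mul_of_nonneg_left hee' hA10.le
        _ = 2*E*m * (1/2 * (A2 * Real.exp (-(β*ca*(2*m)^ℓ)))) := by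
            rw [hA1EA2]; ring
        _ ≤ 2*E*m * ∫ x, w x ∂μ := mul_le_mul_of_nonneg_left hDlow hEm0
    calc ‖∫ x, w x • x ∂μ‖ ≤ ∫ x, w x * ‖x‖ ∂μ := hNle
      _ = _ := hsplit
      _ ≤ K*m * (∫ x, w x ∂μ) + A1 * Real.exp (-(β*cb*(K*m)^ℓ)) * I := add_le_add hS1 hS2
      _ ≤ K*m * (∫ x, w x ∂μ) + 2*E*m * ∫ x, w x ∂μ := add_le_add_right htail _
      _ = (∫ x, w x ∂μ) * ((K + 2*E) * m) := by ring
      _ ≤ (∫ x, w x ∂μ) * (Cm * m) := by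
          apply mul_le_mul_of_nonneg_left _ hD.le
          exact mul_le_mul_of_nonneg_right (hCmdef ▸ le_max_left _ _) hm0
  -- case m < 1
  · have hMM : M = 1 := by rw [hMdef]; exact max_eq_left hm1.le
    rw [hMM, mul_one] at hDlow
    have hnm : (∫ x, ‖x‖ ∂μ) ≤ m := by
      rcases eq_or_lt_of_le hm0 with h0 | h0
      · have hI0' : I = 0 := by rw [← hmp, ← h0, Real.zero_rpow hp0.ne']
        have hae2 : (fun x : EuclideanSpace ℝ (Fin d) => ‖x‖) =ᵐ[μ] 0 := by
          have hae3 := (integral_eq_zero_iff_of_nonneg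
            (fun x => Real.rpow_nonneg (norm_nonneg x) p) hIp).1 (hIdef.symm.trans hI0')
          filter_upwards [hae3] with x hx
          simp only [Pi.zero_apply] at hx ⊢
          by_contra hne
          exact absurd hx (ne_of_gt (Real.rpow_pos_of_pos
            (lt_of_le_of_ne (norm_nonneg x) (Ne.symm hne)) p))
        rw [integral_congr_ae hae2]
        simpa using hm0
      · have hmppos : 0 < m^p := Real.rpow_pos_of_pos h0 p
        have heq : (fun x : EuclideanSpace ℝ (Fin d) => (‖x‖/m)^p)
            = fun x => ‖x‖^p * (m^p)⁻¹ := by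
          funext x; rw [Real.div_rpow (norm_nonneg x) hm0, div_eq_mul_inv]
        have hintq1 : Integrable (fun x : EuclideanSpace ℝ (Fin d) => (‖x‖/m)^p) μ := by
          rw [heq]; exact hIp.mul_const _
        have hintq : Integrable (fun x : EuclideanSpace ℝ (Fin d) => (‖x‖/m)^p + (p-1)) μ :=
          hintq1.add (integrable_const _)
        have hint1 : (∫ x, ((‖x‖/m)^p + (p-1)) ∂μ) = p := by
          rw [integral_add hintq1 (integrable_const _)]
          have h5 : (∫ x, (‖x‖/m)^p ∂μ) = 1 := by
            rw [heq, integral_mul_const, ← hIdef, ← hmp,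
              mul_inv_cancel₀ (ne_of_gt hmppos)]
          rw [h5, integral_const, Measure.real, measure_univ, ENNReal.toReal_one, one_smul]
          ring
        have hmono : (∫ x, p/m * ‖x‖ ∂μ) ≤ ∫ x, ((‖x‖/m)^p + (p-1)) ∂μ := by
          apply integral_mono (hn_int.const_mul _) hintq
          intro x
          have h6 := aux_young hp (div_nonneg (norm_nonneg x) hm0)
          calc p/m * ‖x‖ = p * (‖x‖/m) := by ring
            _ ≤ _ := h6
        rw [integral_const_mul, hint1] at hmono
        have h3 : p * (∫ x, ‖x‖ ∂μ) ≤ p * m := by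
          have h4 := mul_le_mul_of_nonneg_right hmono hm0
          calc p * (∫ x, ‖x‖ ∂μ) = (p/m * ∫ x, ‖x‖ ∂μ) * m := by field_simp
            _ ≤ p * m := h4
        exact le_of_mul_le_mul_left h3 hp0
    have hexp1 : Real.exp (-(β*ca*2^ℓ)) * Real.exp (β*ca*2^ℓ) = 1 := by
      rw [← Real.exp_add, neg_add_cancel, Real.exp_zero]
    have h2C : 2*E*Real.exp (β*ca*2^ℓ) ≤ Cm := hCmdef ▸ le_max_right _ _
    calc ‖∫ x, w x • x ∂μ‖ ≤ ∫ x, w x * ‖x‖ ∂μ := hNle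
      _ ≤ ∫ x, A1 * ‖x‖ ∂μ := integral_mono hwn_int (hn_int.const_mul A1)
          (fun x => mul_le_mul_of_nonneg_right (hwA1 x) (norm_nonneg x))
      _ = A1 * ∫ x, ‖x‖ ∂μ := integral_const_mul _ _
      _ ≤ A1 * m := mul_le_mul_of_nonneg_left hnm hA10.le
      _ = (1/2 * (A2 * Real.exp (-(β*ca*2^ℓ)))) * (2*E*Real.exp (β*ca*2^ℓ)) * m := by
          rw [hA1EA2]; linear_combination (-(E*A2*m)) * hexp1
      _ ≤ (∫ x, w x ∂μ) * (Cm * m) := by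
          have h7 : (1/2 * (A2 * Real.exp (-(β*ca*2^ℓ)))) * (2*E*Real.exp (β*ca*2^ℓ))
              ≤ (∫ x, w x ∂μ) * Cm :=
            mul_le_mul hDlow h2C
              (mul_nonneg (by linarith only [hE0]) (Real.exp_nonneg _)) hD.le
          calc (1/2 * (A2 * Real.exp (-(β*ca*2^ℓ)))) * (2*E*Real.exp (β*ca*2^ℓ)) * m
              ≤ ((∫ x, w x ∂μ) * Cm) * m := mul_le_mul_of_nonneg_right h7 hm0
            _ = (∫ x, w x ∂μ) * (Cm * m) := by ring
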